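/- Let k, s be positive integers, let x_1,…,x_t ∈ {0,1}^n be pairwise distinct assignments with labels a_1,…,a_t ∈ {0,1}, and let S ⊆ {1,…,n} with |S| = s be such that: (i) each assignment x_i sets at most one variable outside of S to true, and (ii) each variable outside of S is set to true by at most one of the assignments x_1,…,x_t. Then there exists a subset I ⊆ {1,…,t} with |I| ≤ 2^s·(k+2) such that there exists a k-term DNF formula agreeing with all labelled samples (x_i,a_i), i ∈ {1,…,t}, if and only if there exists a k-term DNF formula agreeing with the labelled samples (x_i,a_i), i ∈ I. -/

import Mathlib

/-- An assignment `x : Fin n → Bool` satisfies a term (conjunction of literals,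
represented as a finite set of pairs (variable, polarity)) iff every literal is true. -/
def SatTerm {n : ℕ} (T : Finset (Fin n × Bool)) (x : Fin n → Bool) : Prop :=
  ∀ l ∈ T, x l.1 = l.2

/-- An assignment satisfies a DNF formula (a list of terms) iff it satisfies some term. -/
def SatDNF {n : ℕ} (φ : List (Finset (Fin n × Bool))) (x : Fin n → Bool) : Prop :=
  ∃ T ∈ φ, SatTerm T x

namespace Stmt3

open Finset

variable {n t k : ℕ}

/-- the term satisfied exactly by the assignment `x i`. -/
def fullTerm (x : Fin t → Fin n → Bool) (i : Fin t) : Finset (Fin n × Bool) :=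
  Finset.univ.image fun v => (v, x i v)

lemma satTerm_fullTerm (x : Fin t → Fin n → Bool) (i : Fin t) :
    SatTerm (fullTerm x i) (x i) := by
  intro l hl
  simp only [fullTerm, Finset.mem_image, Finset.mem_univ, true_and] at hl
  obtain ⟨v, rfl⟩ := hl
  rfl

lemma eq_of_satTerm_fullTerm {x : Fin t → Fin n → Bool} (hinj : Function.Injective x)
    {i j : Fin t} (h : SatTerm (fullTerm x j) (x i)) : i = j :=
  hinj (funext fun v => h (v, x j v) (by simp [fullTerm]))

/-- negations of all special variables of negative samples. -/
def negLits (x : Fin t → Fin n → Bool) (a : Fin t → Bool) (S : Finset (Fin n)) :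
    Finset (Fin n × Bool) :=
  (Finset.univ.filter fun v => v ∉ S ∧ ∃ i, a i = false ∧ x i v = true).image
    fun v => (v, false)

/-- normalization of a term with no positive literal outside `S`. -/
def caseB (x : Fin t → Fin n → Bool) (a : Fin t → Bool) (S : Finset (Fin n))
    (T : Finset (Fin n × Bool)) : Finset (Fin n × Bool) :=
  T.filter (fun l => l.1 ∈ S) ∪ negLits x a S

open Classical in
/-- normalization of a term. -/
noncomputable def normT (x : Fin t → Fin n → Bool) (a : Fin t → Bool) (S : Finset (Fin n))
    (v0 : Fin n) (T : Finset (Fin n × Bool)) : Finset (Fin n × Bool) :=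
  if _ : ∃ l ∈ T, l.1 ∉ S ∧ l.2 = true then
    if h2 : ∃ i, a i = true ∧ SatTerm T (x i) then fullTerm x h2.choose
    else {(v0, true), (v0, false)}
  else caseB x a S T

/-- restriction of a sample to `S`. -/
def rset (x : Fin t → Fin n → Bool) (S : Finset (Fin n)) (i : Fin t) : Finset (Fin n) :=
  S.filter fun v => x i v = true

def posgroup (x : Fin t → Fin n → Bool) (a : Fin t → Bool) (S : Finset (Fin n))
    (p : Finset (Fin n)) : Finset (Fin t) :=
  Finset.univ.filter fun i => a i = true ∧ rset x S i = p

def negplain (x : Fin t → Fin n → Bool) (a : Fin t → Bool) (S : Finset (Fin n))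
    (p : Finset (Fin n)) : Finset (Fin t) :=
  Finset.univ.filter fun i => a i = false ∧ rset x S i = p ∧ ∀ v ∉ S, x i v = false

noncomputable def kernpos (k : ℕ) (x : Fin t → Fin n → Bool) (a : Fin t → Bool)
    (S : Finset (Fin n)) (p : Finset (Fin n)) : Finset (Fin t) :=
  if h : k + 1 ≤ (posgroup x a S p).card then
    (Finset.exists_subset_card_eq h).choose
  else posgroup x a S p

noncomputable def kern (k : ℕ) (x : Fin t → Fin n → Bool) (a : Fin t → Bool)
    (S : Finset (Fin n)) : Finset (Fin t) :=
  S.powerset.biUnion fun p => kernpos k x a S p ∪ negplain x a S p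

lemma kernpos_subset (x : Fin t → Fin n → Bool) (a : Fin t → Bool) (S : Finset (Fin n))
    (p : Finset (Fin n)) : kernpos k x a S p ⊆ posgroup x a S p := by
  unfold kernpos
  split_ifs with h
  · exact (Finset.exists_subset_card_eq h).choose_spec.1
  · exact Finset.Subset.refl _

lemma kernpos_card_le (x : Fin t → Fin n → Bool) (a : Fin t → Bool) (S : Finset (Fin n))
    (p : Finset (Fin n)) : (kernpos k x a S p).card ≤ k + 1 := by
  unfold kernpos
  split_ifs with h
  · exact le_of_eq (Finset.exists_subset_card_eq h).choose_spec.2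
  · omega

lemma kernpos_card_eq {x : Fin t → Fin n → Bool} {a : Fin t → Bool} {S : Finset (Fin n)}
    {p : Finset (Fin n)} (h : k + 1 ≤ (posgroup x a S p).card) :
    (kernpos k x a S p).card = k + 1 := by
  unfold kernpos
  rw [dif_pos h]
  exact (Finset.exists_subset_card_eq h).choose_spec.2

end Stmt3

open Finset Stmt3 in
theorem stmt_3 (n t k s : ℕ) (hk : 1 ≤ k) (hs : 1 ≤ s)
    (x : Fin t → Fin n → Bool) (a : Fin t → Bool) (hinj : Function.Injective x)
    (S : Finset (Fin n)) (hScard : S.card = s)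
    (hrow : ∀ i : Fin t,
      (Finset.univ.filter (fun v : Fin n => v ∉ S ∧ x i v = true)).card ≤ 1)
    (hcol : ∀ v : Fin n, v ∉ S →
      (Finset.univ.filter (fun i : Fin t => x i v = true)).card ≤ 1) :
    ∃ I : Finset (Fin t), I.card ≤ 2 ^ s * (k + 2) ∧
      ((∃ φ : List (Finset (Fin n × Bool)), φ.length ≤ k ∧
        ∀ i : Fin t, SatDNF φ (x i) ↔ a i = true) ↔
      (∃ φ : List (Finset (Fin n × Bool)), φ.length ≤ k ∧
        ∀ i ∈ I, SatDNF φ (x i) ↔ a i = true)) := by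
  classical
  by_cases hn : n = 0
  · subst hn
    -- all samples are equal, so t ≤ 1 and we take I = univ
    have htle : t ≤ 1 := by
      by_contra h
      push_neg at h
      have e : x ⟨0, by omega⟩ = x ⟨1, by omega⟩ := funext fun v => v.elim0
      have := hinj e
      simp [Fin.ext_iff] at this
    refine ⟨Finset.univ, ?_, ?_⟩
    · have h1 : (Finset.univ : Finset (Fin t)).card = t := by simp
      have hb : 0 < 2 ^ s * (k + 2) := by positivity
      omega
    · constructor
      · rintro ⟨φ, h1, h2⟩; exact ⟨φ, h1, fun i _ => h2 i⟩
      · rintro ⟨φ, h1, h2⟩; exact ⟨φ, h1, fun i => h2 i (Finset.mem_univ i)⟩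
  · have hnpos : 0 < n := Nat.pos_of_ne_zero hn
    set v0 : Fin n := ⟨0, hnpos⟩ with hv0
    -- basic structural facts
    have hcol' : ∀ v, v ∉ S → ∀ i j, x i v = true → x j v = true → i = j := by
      intro v hv i j hi hj
      exact Finset.card_le_one.mp (hcol v hv) i (by simp [hi]) j (by simp [hj])
    have hxS : ∀ i j : Fin t, rset x S i = rset x S j → ∀ v ∈ S, x i v = x j v := by
      intro i j hrij v hv
      have h1 : (x i v = true) ↔ (x j v = true) := by
        constructor
        · intro h
          have : v ∈ rset x S j := hrij ▸ (Finset.mem_filter.mpr ⟨hv, h⟩)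
          exact (Finset.mem_filter.mp this).2
        · intro h
          have : v ∈ rset x S i := hrij ▸ (Finset.mem_filter.mpr ⟨hv, h⟩)
          exact (Finset.mem_filter.mp this).2
      cases hxi : x i v <;> cases hxj : x j v <;> simp_all
    -- every positive sample satisfies all literals in negLits
    have hposneg : ∀ i : Fin t, a i = true → SatTerm (negLits x a S) (x i) := by
      intro i hi l hl
      simp only [negLits, Finset.mem_image, Finset.mem_filter, Finset.mem_univ,
        true_and] at hl
      obtain ⟨v, ⟨hv, j, hj1, hj2⟩, rfl⟩ := hl
      show x i v = false
      by_contra h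
      have hxt : x i v = true := by
        cases hxiv : x i v
        · exact absurd hxiv h
        · rfl
      have := hcol' v hv i j hxt hj2
      rw [this, hj1] at hi
      exact absurd hi (by simp)
    refine ⟨kern k x a S, ?_, ?_⟩
    · -- cardinality bound
      calc (kern k x a S).card
          ≤ ∑ p ∈ S.powerset, (kernpos k x a S p ∪ negplain x a S p).card :=
            Finset.card_biUnion_le
        _ ≤ ∑ p ∈ S.powerset, (k + 2) := by
            apply Finset.sum_le_sum
            intro p _
            have h1 := kernpos_card_le (k := k) x a S p
            have h2 : (negplain x a S p).card ≤ 1 := by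
              apply Finset.card_le_one.mpr
              intro i hi j hj
              simp only [negplain, Finset.mem_filter, Finset.mem_univ, true_and] at hi hj
              apply hinj
              funext v
              by_cases hv : v ∈ S
              · exact hxS i j (hi.2.1.trans hj.2.1.symm) v hv
              · rw [hi.2.2 v hv, hj.2.2 v hv]
            have h3 := Finset.card_union_le (kernpos k x a S p) (negplain x a S p)
            omega
        _ = 2 ^ s * (k + 2) := by
            rw [Finset.sum_const, Finset.card_powerset, hScard, smul_eq_mul]
    · constructor
      · rintro ⟨φ, h1, h2⟩; exact ⟨φ, h1, fun i _ => h2 i⟩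
      · rintro ⟨φ, hlen, hφ⟩
        -- membership facts about the kernel
        have hmemkern : ∀ p ∈ S.powerset,
            kernpos k x a S p ∪ negplain x a S p ⊆ kern k x a S := by
          intro p hp
          intro i hi
          exact Finset.mem_biUnion.mpr ⟨p, hp, hi⟩
        have hrP : ∀ i : Fin t, rset x S i ∈ S.powerset :=
          fun i => Finset.mem_powerset.mpr (Finset.filter_subset _ _)
        have hnegkern : ∀ i : Fin t, a i = false → (∀ v ∉ S, x i v = false) →
            i ∈ kern k x a S := by
          intro i hi hplain
          apply hmemkern _ (hrP i)
          apply Finset.mem_union_right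
          exact Finset.mem_filter.mpr ⟨Finset.mem_univ i, hi, rfl, hplain⟩
        refine ⟨φ.map (normT x a S v0), by simpa using hlen, ?_⟩
        intro i
        constructor
        · -- soundness: if x i satisfies the normalized formula, then a i = true
          rintro ⟨T', hT', hsat⟩
          obtain ⟨T, hTφ, rfl⟩ := List.mem_map.mp hT'
          unfold normT at hsat
          split_ifs at hsat with hA h2
          · -- fullTerm case
            have hj := h2.choose_spec
            have := eq_of_satTerm_fullTerm hinj hsat
            rw [this]
            exact hj.1
          · -- junk term: unsatisfiable
            exfalso
            have ht := hsat (v0, true) (by simp)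
            have hf := hsat (v0, false) (by simp)
            simp at ht hf
            rw [ht] at hf
            exact absurd hf (by simp)
          · -- caseB
            by_contra hai
            have hai' : a i = false := by
              cases h : a i
              · rfl
              · exact absurd h hai
            by_cases hplain : ∀ v ∉ S, x i v = false
            · -- i is a plain negative, hence in the kernel; but it satisfies T
              have hiK : i ∈ kern k x a S := hnegkern i hai' hplain
              have hsatT : SatTerm T (x i) := by
                intro l hl
                by_cases hlS : l.1 ∈ S
                · exact hsat l (Finset.mem_union_left _ (Finset.mem_filter.mpr ⟨hl, hlS⟩))
                · have hl2 : l.2 = false := by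
                    by_contra hc
                    have : l.2 = true := by
                      cases hl2 : l.2
                      · exact absurd hl2 hc
                      · rfl
                    exact hA ⟨l, hl, hlS, this⟩
                  rw [hl2]
                  exact hplain l.1 hlS
              have := (hφ i hiK).mp ⟨T, hTφ, hsatT⟩
              exact hai this
            · -- i has a special variable v, which is negated in negLits
              push_neg at hplain
              obtain ⟨v, hv, hxv⟩ := hplain
              have hxvt : x i v = true := by
                cases hc : x i v
                · exact absurd hc hxv
                · rfl
              have hmem : (v, false) ∈ negLits x a S := by
                simp only [negLits, Finset.mem_image, Finset.mem_filter, Finset.mem_univ,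
                  true_and]
                exact ⟨v, ⟨hv, i, hai', hxvt⟩, rfl⟩
              have := hsat (v, false) (Finset.mem_union_right _ hmem)
              simp only at this
              rw [hxvt] at this
              exact absurd this (by simp)
        · -- completeness: if a i = true then x i satisfies the normalized formula
          intro hai
          by_cases hiK : i ∈ kern k x a S
          · obtain ⟨T, hTφ, hsatT⟩ := (hφ i hiK).mpr hai
            refine ⟨normT x a S v0 T, List.mem_map.mpr ⟨T, hTφ, rfl⟩, ?_⟩
            unfold normT
            split_ifs with hA h2
            · -- T has a positive literal outside S; i is its unique satisfier
              obtain ⟨l, hl, hlS, hl2⟩ := hA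
              have hj := h2.choose_spec
              have hxi : x i l.1 = true := by rw [hsatT l hl, hl2]
              have hxj : x (h2.choose) l.1 = true := by rw [hj.2 l hl, hl2]
              have : i = h2.choose := hcol' l.1 hlS i h2.choose hxi hxj
              rw [this]
              exact satTerm_fullTerm x h2.choose
            · exact absurd ⟨i, hai, hsatT⟩ h2
            · -- caseB
              intro l hl
              rcases Finset.mem_union.mp hl with hl' | hl'
              · exact hsatT l (Finset.mem_filter.mp hl').1
              · exact hposneg i hai l hl'
          · -- i is a positive outside the kernel: its group has ≥ k+1 kernel positives
            have hbig : k + 1 ≤ (posgroup x a S (rset x S i)).card := by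
              by_contra hc
              apply hiK
              apply hmemkern _ (hrP i)
              apply Finset.mem_union_left
              unfold kernpos
              rw [dif_neg hc]
              exact Finset.mem_filter.mpr ⟨Finset.mem_univ i, hai, rfl⟩
            set J := kernpos k x a S (rset x S i) with hJ
            have hJcard : J.card = k + 1 := kernpos_card_eq hbig
            have hJsub : J ⊆ posgroup x a S (rset x S i) := kernpos_subset x a S _
            have hJK : J ⊆ kern k x a S := fun j hj =>
              hmemkern _ (hrP i) (Finset.mem_union_left _ hj)
            -- each member of J satisfies some term of φ
            have hJsat : ∀ j ∈ J, SatDNF φ (x j) := by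
              intro j hj
              have hjp := Finset.mem_filter.mp (hJsub hj)
              exact (hφ j (hJK hj)).mpr hjp.2.1
            set g : Fin t → Finset (Fin n × Bool) :=
              fun j => if h : SatDNF φ (x j) then h.choose else ∅ with hg
            have hgφ : ∀ j ∈ J, g j ∈ φ.toFinset := by
              intro j hj
              simp only [hg, dif_pos (hJsat j hj)]
              exact List.mem_toFinset.mpr (hJsat j hj).choose_spec.1
            have hgsat : ∀ j ∈ J, SatTerm (g j) (x j) := by
              intro j hj
              simp only [hg, dif_pos (hJsat j hj)]
              exact (hJsat j hj).choose_spec.2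
            have hcard : φ.toFinset.card < J.card := by
              have := φ.toFinset_card_le
              omega
            obtain ⟨j₁, hj₁, j₂, hj₂, hne, heq⟩ :=
              Finset.exists_ne_map_eq_of_card_lt_of_maps_to hcard hgφ
            set T := g j₁ with hT
            have hsat1 : SatTerm T (x j₁) := hgsat j₁ hj₁
            have hsat2 : SatTerm T (x j₂) := heq ▸ hgsat j₂ hj₂
            have hTφ : T ∈ φ := List.mem_toFinset.mp (hgφ j₁ hj₁)
            -- T has no positive literal outside S
            have hA : ¬ ∃ l ∈ T, l.1 ∉ S ∧ l.2 = true := by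
              rintro ⟨l, hl, hlS, hl2⟩
              apply hne
              exact hcol' l.1 hlS j₁ j₂ (by rw [hsat1 l hl, hl2]) (by rw [hsat2 l hl, hl2])
            refine ⟨normT x a S v0 T, List.mem_map.mpr ⟨T, hTφ, rfl⟩, ?_⟩
            unfold normT
            rw [dif_neg hA]
            intro l hl
            rcases Finset.mem_union.mp hl with hl' | hl'
            · -- S-part of T: i agrees with j₁ on S
              have hlm := Finset.mem_filter.mp hl'
              have hj1g := Finset.mem_filter.mp (hJsub hj₁)
              have : x i l.1 = x j₁ l.1 :=
                hxS i j₁ (hj1g.2.2.symm) l.1 hlm.2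
              rw [this]
              exact hsat1 l hlm.1
            · exact hposneg i hai l hl'
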